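/- For all a₁, a₂, a₃, b₁, b₂, b₃ ≥ 0, the pair (a, b) is T-admissible if and only if for all i, j ∈ {1,2,3}, the triple (a₁·α_{i,1} + b₁·α_{j,1}, a₂·α_{i,2} + b₂·α_{j,2}, a₃·α_{i,3} + b₃·α_{j,3}) lies in T, where α_{i,k} denotes the k-th coordinate of α_i. -/
import Mathlib


/-- The set `T = {x ∈ ℝ³ : 0 ≤ xₖ ≤ 1 for each k, and x₁+x₂+x₃ ≤ 2}`. -/
def T : Set (ℝ × ℝ × ℝ) :=
  {x | 0 ≤ x.1 ∧ x.1 ≤ 1 ∧ 0 ≤ x.2.1 ∧ x.2.1 ≤ 1 ∧ 0 ≤ x.2.2 ∧ x.2.2 ≤ 1 ∧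
    x.1 + x.2.1 + x.2.2 ≤ 2}

/-- The three points `α₁ = (1,0,1)`, `α₂ = (1,1,0)`, `α₃ = (0,1,1)`. -/
def α : Fin 3 → ℝ × ℝ × ℝ
  | 0 => (1, 0, 1)
  | 1 => (1, 1, 0)
  | 2 => (0, 1, 1)

/-- `(a, b)` is `T`-admissible. -/
def Admissible (a b : ℝ × ℝ × ℝ) : Prop :=
  ∀ u ∈ T, ∀ v ∈ T,
    (a.1 * u.1 + b.1 * v.1, a.2.1 * u.2.1 + b.2.1 * v.2.1,
      a.2.2 * u.2.2 + b.2.2 * v.2.2) ∈ T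

lemma alpha0 : α 0 = (1, 0, 1) := rfl
lemma alpha1 : α 1 = (1, 1, 0) := rfl
lemma alpha2 : α 2 = (0, 1, 1) := rfl

lemma dot_le_vertex (a₁ a₂ a₃ u₁ u₂ u₃ : ℝ)
    (ha₁ : 0 ≤ a₁) (ha₂ : 0 ≤ a₂) (ha₃ : 0 ≤ a₃)
    (hu₁ : 0 ≤ u₁) (hu₁' : u₁ ≤ 1) (hu₂ : 0 ≤ u₂) (hu₂' : u₂ ≤ 1)
    (hu₃ : 0 ≤ u₃) (hu₃' : u₃ ≤ 1) (hus : u₁ + u₂ + u₃ ≤ 2) :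
    ∃ i : Fin 3, a₁ * u₁ + a₂ * u₂ + a₃ * u₃ ≤
      a₁ * (α i).1 + a₂ * (α i).2.1 + a₃ * (α i).2.2 := by
  rcases le_total a₁ a₂ with h12 | h12
  · rcases le_total a₁ a₃ with h13 | h13
    · refine ⟨2, ?_⟩
      rw [alpha2]
      have e1 : 0 ≤ (a₂ - a₁) * (1 - u₂) :=
        mul_nonneg (by linarith) (by linarith)
      have e2 : 0 ≤ (a₃ - a₁) * (1 - u₃) :=
        mul_nonneg (by linarith) (by linarith)
      have e3 : 0 ≤ a₁ * (2 - u₁ - u₂ - u₃) :=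
        mul_nonneg ha₁ (by linarith)
      simp only []
      nlinarith [e1, e2, e3]
    · refine ⟨1, ?_⟩
      rw [alpha1]
      have e1 : 0 ≤ (a₁ - a₃) * (1 - u₁) := mul_nonneg (by linarith) (by linarith)
      have e2 : 0 ≤ (a₂ - a₃) * (1 - u₂) := mul_nonneg (by linarith) (by linarith)
      have e3 : 0 ≤ a₃ * (2 - u₁ - u₂ - u₃) := mul_nonneg ha₃ (by linarith)
      simp only []
      nlinarith [e1, e2, e3]
  · rcases le_total a₂ a₃ with h23 | h23
    · refine ⟨0, ?_⟩
      rw [alpha0]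
      have e1 : 0 ≤ (a₁ - a₂) * (1 - u₁) := mul_nonneg (by linarith) (by linarith)
      have e2 : 0 ≤ (a₃ - a₂) * (1 - u₃) := mul_nonneg (by linarith) (by linarith)
      have e3 : 0 ≤ a₂ * (2 - u₁ - u₂ - u₃) := mul_nonneg ha₂ (by linarith)
      simp only []
      nlinarith [e1, e2, e3]
    · refine ⟨1, ?_⟩
      rw [alpha1]
      have e1 : 0 ≤ (a₁ - a₃) * (1 - u₁) := mul_nonneg (by linarith) (by linarith)
      have e2 : 0 ≤ (a₂ - a₃) * (1 - u₂) := mul_nonneg (by linarith) (by linarith)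
      have e3 : 0 ≤ a₃ * (2 - u₁ - u₂ - u₃) := mul_nonneg ha₃ (by linarith)
      simp only []
      nlinarith [e1, e2, e3]

theorem stmt_6 (a₁ a₂ a₃ b₁ b₂ b₃ : ℝ)
    (ha₁ : 0 ≤ a₁) (ha₂ : 0 ≤ a₂) (ha₃ : 0 ≤ a₃)
    (hb₁ : 0 ≤ b₁) (hb₂ : 0 ≤ b₂) (hb₃ : 0 ≤ b₃) :
    Admissible (a₁, a₂, a₃) (b₁, b₂, b₃) ↔
      ∀ i j : Fin 3,
        (a₁ * (α i).1 + b₁ * (α j).1,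
         a₂ * (α i).2.1 + b₂ * (α j).2.1,
         a₃ * (α i).2.2 + b₃ * (α j).2.2) ∈ T := by
  constructor
  · intro h i j
    have hmem : ∀ k : Fin 3, α k ∈ T := by
      intro k
      have hk : k = 0 ∨ k = 1 ∨ k = 2 := by omega
      rcases hk with hk | hk | hk <;> subst hk <;>
        · simp only [T, Set.mem_setOf_eq, alpha0, alpha1, alpha2]
          norm_num
    exact h (α i) (hmem i) (α j) (hmem j)
  · intro h u hu v hv
    obtain ⟨hu1, hu1', hu2, hu2', hu3, hu3', hus⟩ := hu
    obtain ⟨hv1, hv1', hv2, hv2', hv3, hv3', hvs⟩ := hv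
    have h00 := h 0 0
    have h11 := h 1 1
    have h22 := h 2 2
    rw [alpha0] at h00
    rw [alpha1] at h11
    rw [alpha2] at h22
    simp only [T, Set.mem_setOf_eq] at h00 h11 h22
    norm_num at h00 h11 h22
    obtain ⟨i, hai⟩ := dot_le_vertex a₁ a₂ a₃ u.1 u.2.1 u.2.2 ha₁ ha₂ ha₃
      hu1 hu1' hu2 hu2' hu3 hu3' hus
    obtain ⟨j, hbj⟩ := dot_le_vertex b₁ b₂ b₃ v.1 v.2.1 v.2.2 hb₁ hb₂ hb₃
      hv1 hv1' hv2 hv2' hv3 hv3' hvs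
    have hij := h i j
    simp only [T, Set.mem_setOf_eq] at hij
    obtain ⟨-, -, -, -, -, -, hsum⟩ := hij
    have ka1 : a₁ * u.1 ≤ a₁ := mul_le_of_le_one_right ha₁ hu1'
    have kb1 : b₁ * v.1 ≤ b₁ := mul_le_of_le_one_right hb₁ hv1'
    have ka2 : a₂ * u.2.1 ≤ a₂ := mul_le_of_le_one_right ha₂ hu2'
    have kb2 : b₂ * v.2.1 ≤ b₂ := mul_le_of_le_one_right hb₂ hv2'
    have ka3 : a₃ * u.2.2 ≤ a₃ := mul_le_of_le_one_right ha₃ hu3'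
    have kb3 : b₃ * v.2.2 ≤ b₃ := mul_le_of_le_one_right hb₃ hv3'
    simp only [T, Set.mem_setOf_eq]
    refine ⟨by positivity, by obtain ⟨e, -⟩ := h00; linarith,
      by positivity, by obtain ⟨-, e, -⟩ := h11; linarith,
      by positivity, by obtain ⟨-, -, e, -⟩ := h00; linarith,
      by linarith⟩
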